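/- Define the relation ∼ on V = χ_ξ^{-1}(0) \ {0} by x ∼ y iff χ_ξ(x−y) = 0, where χ_ξ(x) = ∫ min{‖P_E x‖, ‖P_{E⊥} x‖} dξ(E). Then ∼ is an equivalence relation on V, and if x, y ∈ V with x ≁ y, then x and y are orthogonal in ℝⁿ. -/

import Mathlib

open MeasureTheory
open scoped ENNReal RealInnerProductSpace

/-- The orthogonal projection onto `E`, as a map `ℝⁿ → ℝⁿ`. -/
noncomputable def projCLM {n : ℕ} (E : Submodule ℝ (EuclideanSpace ℝ (Fin n))) :
    EuclideanSpace ℝ (Fin n) →L[ℝ] EuclideanSpace ℝ (Fin n) :=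
  E.subtypeL.comp (E.orthogonalProjection)

/-- The space of linear subspaces of `ℝⁿ`, topologized so that `E ↦ P_E` is continuous. -/
noncomputable instance subspaceTop (n : ℕ) :
    TopologicalSpace (Submodule ℝ (EuclideanSpace ℝ (Fin n))) :=
  TopologicalSpace.induced projCLM inferInstance

/-- The Borel σ-algebra on the space of linear subspaces of `ℝⁿ`. -/
noncomputable instance subspaceMeas (n : ℕ) :
    MeasurableSpace (Submodule ℝ (EuclideanSpace ℝ (Fin n))) := borel _

/-- `χ_ξ(x) = ∫ min{‖P_E x‖, ‖P_{E⊥} x‖} dξ(E)`. -/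
noncomputable def chiXi {n : ℕ}
    (ξ : Measure (Submodule ℝ (EuclideanSpace ℝ (Fin n))))
    (x : EuclideanSpace ℝ (Fin n)) : ℝ :=
  ∫ E, min ‖projCLM E x‖ ‖projCLM Eᗮ x‖ ∂ξ

noncomputable instance subspaceBorel (n : ℕ) :
    BorelSpace (Submodule ℝ (EuclideanSpace ℝ (Fin n))) := ⟨rfl⟩

lemma projCLM_orthogonal_apply {n : ℕ} (E : Submodule ℝ (EuclideanSpace ℝ (Fin n)))
    (x : EuclideanSpace ℝ (Fin n)) : projCLM Eᗮ x = x - projCLM E x := by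
  have h := congrFun (congrArg (DFunLike.coe)
    (Submodule.id_eq_sum_starProjection_self_orthogonalComplement (K := E))) x
  simp only [ContinuousLinearMap.id_apply, ContinuousLinearMap.add_apply] at h
  have hx : x = projCLM E x + projCLM Eᗮ x := h
  exact eq_sub_of_add_eq' hx.symm

lemma projCLM_eq_zero_iff {n : ℕ} (E : Submodule ℝ (EuclideanSpace ℝ (Fin n)))
    (x : EuclideanSpace ℝ (Fin n)) : projCLM E x = 0 ↔ x ∈ Eᗮ := by
  rw [projCLM]
  simp only [ContinuousLinearMap.comp_apply, Submodule.subtypeL_apply,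
    ZeroMemClass.coe_eq_zero]
  exact Submodule.orthogonalProjectionOnto_eq_zero_iff

lemma projCLM_norm_le {n : ℕ} (E : Submodule ℝ (EuclideanSpace ℝ (Fin n)))
    (x : EuclideanSpace ℝ (Fin n)) : ‖projCLM E x‖ ≤ ‖x‖ := by
  have h1 := (E.orthogonalProjection).le_opNorm x
  have h2 := Submodule.orthogonalProjectionOnto_norm_le E
  have h3 : ‖projCLM E x‖ = ‖E.orthogonalProjection x‖ := rfl
  nlinarith [norm_nonneg x]

lemma chiXi_integrand_measurable {n : ℕ} (x : EuclideanSpace ℝ (Fin n)) :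
    Measurable fun E : Submodule ℝ (EuclideanSpace ℝ (Fin n)) =>
      min ‖projCLM E x‖ ‖projCLM Eᗮ x‖ := by
  have h1 : Continuous (projCLM (n := n)) := continuous_induced_dom
  have h2 : Continuous fun E : Submodule ℝ (EuclideanSpace ℝ (Fin n)) => projCLM E x :=
    ((ContinuousLinearMap.apply ℝ (EuclideanSpace ℝ (Fin n)) x).continuous).comp h1
  have heq : (fun E : Submodule ℝ (EuclideanSpace ℝ (Fin n)) =>
      min ‖projCLM E x‖ ‖projCLM Eᗮ x‖)
      = fun E => min ‖projCLM E x‖ ‖x - projCLM E x‖ := by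
    funext E; rw [projCLM_orthogonal_apply]
  rw [heq]
  exact ((h2.norm).min ((continuous_const.sub h2).norm)).measurable

lemma chiXi_integrand_integrable {n : ℕ}
    (ξ : Measure (Submodule ℝ (EuclideanSpace ℝ (Fin n)))) [IsProbabilityMeasure ξ]
    (x : EuclideanSpace ℝ (Fin n)) :
    Integrable (fun E => min ‖projCLM E x‖ ‖projCLM Eᗮ x‖) ξ := by
  refine ⟨(chiXi_integrand_measurable x).aestronglyMeasurable,
    HasFiniteIntegral.of_bounded (C := ‖x‖) (ae_of_all _ fun E => ?_)⟩
  have h0 : (0:ℝ) ≤ min ‖projCLM E x‖ ‖projCLM Eᗮ x‖ :=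
    le_min (norm_nonneg _) (norm_nonneg _)
  rw [Real.norm_of_nonneg h0]
  exact (min_le_left _ _).trans (projCLM_norm_le E x)

lemma chiXi_eq_zero_iff {n : ℕ}
    (ξ : Measure (Submodule ℝ (EuclideanSpace ℝ (Fin n)))) [IsProbabilityMeasure ξ]
    (x : EuclideanSpace ℝ (Fin n)) :
    chiXi ξ x = 0 ↔ ∀ᵐ E ∂ξ, x ∈ E ∨ x ∈ (Eᗮ : Submodule ℝ (EuclideanSpace ℝ (Fin n))) := by
  rw [chiXi, integral_eq_zero_iff_of_nonneg
    (fun E => le_min (norm_nonneg _) (norm_nonneg _)) (chiXi_integrand_integrable ξ x)]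
  constructor <;> intro h <;> filter_upwards [h] with E hE
  · have : min ‖projCLM E x‖ ‖projCLM Eᗮ x‖ = 0 := hE
    rcases min_eq_iff.mp this with ⟨h1, _⟩ | ⟨h1, _⟩
    · right
      exact (projCLM_eq_zero_iff E x).mp (norm_eq_zero.mp h1)
    · left
      have := (projCLM_eq_zero_iff Eᗮ x).mp (norm_eq_zero.mp h1)
      rwa [Submodule.orthogonal_orthogonal] at this
  · show min ‖projCLM E x‖ ‖projCLM Eᗮ x‖ = 0
    rcases hE with hx | hx
    · have : projCLM Eᗮ x = 0 := by
        rw [projCLM_eq_zero_iff, Submodule.orthogonal_orthogonal]; exact hx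
      simp [this]
    · have : projCLM E x = 0 := (projCLM_eq_zero_iff E x).mpr hx
      simp [this]

lemma chiXi_zero {n : ℕ}
    (ξ : Measure (Submodule ℝ (EuclideanSpace ℝ (Fin n)))) [IsProbabilityMeasure ξ] :
    chiXi ξ 0 = 0 := by
  rw [chiXi_eq_zero_iff]
  filter_upwards with E
  exact Or.inl E.zero_mem

lemma mem_inf_orthogonal_eq_zero {n : ℕ} {E : Submodule ℝ (EuclideanSpace ℝ (Fin n))}
    {v : EuclideanSpace ℝ (Fin n)} (h1 : v ∈ E) (h2 : v ∈ Eᗮ) : v = 0 := by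
  have := (Submodule.mem_orthogonal E v).mp h2 v h1
  exact inner_self_eq_zero.mp this

/-- The relation `x ∼ y ↔ χ_ξ(x−y) = 0` is an equivalence relation on
`V = χ_ξ⁻¹(0) \ {0}`, and non-equivalent elements of `V` are orthogonal. -/
theorem chiXi_rel_equivalence_and_orthogonal {n : ℕ}
    (ξ : Measure (Submodule ℝ (EuclideanSpace ℝ (Fin n)))) [IsProbabilityMeasure ξ] :
    let V : Set (EuclideanSpace ℝ (Fin n)) := {x | chiXi ξ x = 0} \ {0}
    (∀ x ∈ V, chiXi ξ (x - x) = 0) ∧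
    (∀ x ∈ V, ∀ y ∈ V, chiXi ξ (x - y) = 0 → chiXi ξ (y - x) = 0) ∧
    (∀ x ∈ V, ∀ y ∈ V, ∀ z ∈ V,
      chiXi ξ (x - y) = 0 → chiXi ξ (y - z) = 0 → chiXi ξ (x - z) = 0) ∧
    (∀ x ∈ V, ∀ y ∈ V, chiXi ξ (x - y) ≠ 0 → ⟪x, y⟫ = 0) := by
  intro V
  refine ⟨?_, ?_, ?_, ?_⟩
  · intro x _
    rw [sub_self]
    exact chiXi_zero ξ
  · intro x _ y _ hxy
    rw [chiXi_eq_zero_iff] at hxy ⊢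
    filter_upwards [hxy] with E hE
    have : y - x = -(x - y) := by abel
    rw [this]
    rcases hE with h | h
    · exact Or.inl (E.neg_mem h)
    · exact Or.inr (Eᗮ.neg_mem h)
  · intro x hx y hy z hz hxy hyz
    rw [chiXi_eq_zero_iff] at hxy hyz ⊢
    have hxV : chiXi ξ x = 0 := hx.1
    have hyV : chiXi ξ y = 0 := hy.1
    have hzV : chiXi ξ z = 0 := hz.1
    rw [chiXi_eq_zero_iff] at hxV hyV hzV
    have hyne : y ≠ 0 := hy.2
    filter_upwards [hxy, hyz, hxV, hyV, hzV] with E hExy hEyz hEx hEy hEz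
    have hsplit : x - z = (x - y) + (y - z) := by abel
    rcases hExy with h1 | h1 <;> rcases hEyz with h2 | h2
    · left; rw [hsplit]; exact E.add_mem h1 h2
    · -- x - y ∈ E, y - z ∈ Eᗮ
      rcases hEy with hy' | hy'
      · rcases hEz with hz' | hz'
        · have hmem : y - z ∈ E := E.sub_mem hy' hz'
          have h0 : y - z = 0 := mem_inf_orthogonal_eq_zero hmem h2
          left; rw [hsplit, h0, add_zero]; exact h1
        · exfalso
          have hyEo : y ∈ Eᗮ := by
            have hr : y = (y - z) + z := by abel
            rw [hr]; exact Eᗮ.add_mem h2 hz'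
          exact hyne (mem_inf_orthogonal_eq_zero hy' hyEo)
      · rcases hEx with hx' | hx'
        · exfalso
          have hyE : y ∈ E := by
            have hr : y = x - (x - y) := by abel
            rw [hr]; exact E.sub_mem hx' h1
          exact hyne (mem_inf_orthogonal_eq_zero hyE hy')
        · right
          have hzEo : z ∈ Eᗮ := by
            have hr : z = y - (y - z) := by abel
            rw [hr]; exact Eᗮ.sub_mem hy' h2
          exact Eᗮ.sub_mem hx' hzEo
    · -- x - y ∈ Eᗮ, y - z ∈ E
      rcases hEy with hy' | hy'
      · have hzE : z ∈ E := by
          have hr : z = y - (y - z) := by abel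
          rw [hr]; exact E.sub_mem hy' h2
        rcases hEx with hx' | hx'
        · left; exact E.sub_mem hx' hzE
        · exfalso
          have hyEo : y ∈ Eᗮ := by
            have hr : y = x - (x - y) := by abel
            rw [hr]; exact Eᗮ.sub_mem hx' h1
          exact hyne (mem_inf_orthogonal_eq_zero hy' hyEo)
      · rcases hEz with hz' | hz'
        · exfalso
          have hyE : y ∈ E := by
            have hr : y = (y - z) + z := by abel
            rw [hr]; exact E.add_mem h2 hz'
          exact hyne (mem_inf_orthogonal_eq_zero hyE hy')
        · have hmem : y - z ∈ Eᗮ := Eᗮ.sub_mem hy' hz'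
          have h0 : y - z = 0 := mem_inf_orthogonal_eq_zero h2 hmem
          right; rw [hsplit, h0, add_zero]; exact h1
    · right; rw [hsplit]; exact Eᗮ.add_mem h1 h2
  · intro x hx y hy hne
    by_contra hinner
    apply hne
    rw [chiXi_eq_zero_iff]
    have hxV : chiXi ξ x = 0 := hx.1
    have hyV : chiXi ξ y = 0 := hy.1
    rw [chiXi_eq_zero_iff] at hxV hyV
    filter_upwards [hxV, hyV] with E hEx hEy
    rcases hEx with hx' | hx' <;> rcases hEy with hy' | hy'
    · exact Or.inl (E.sub_mem hx' hy')
    · exact absurd ((Submodule.mem_orthogonal E y).mp hy' x hx') hinner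
    · exfalso
      apply hinner
      have := (Submodule.mem_orthogonal E x).mp hx' y hy'
      rwa [real_inner_comm] at this
    · exact Or.inr (Eᗮ.sub_mem hx' hy')
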